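/- Let p ≥ 3 be an odd integer, set e_p := exp(2πi/p) and e_p^w := exp(2πi w/p) for w ∈ ℂ. Then for every λ ∈ ℂ: Σ_{n=0}^{p−1} ( e_p^{λ+2n+1} + e_p^{−(λ+2n+1)} − 2 ) · σ_{p−1}( e_p^{λ+2n+1}, e_p ) = p · ( exp(2πiλ) + exp(−2πiλ) − 2 ). -/

import Mathlib

/-- `e_p := exp(2πi/p)`. -/
noncomputable def ep (p : ℕ) : ℂ :=
  Complex.exp (2 * Real.pi * Complex.I / p)

/-- `e_p^w := exp(2πi w / p)`. -/
noncomputable def epow (p : ℕ) (w : ℂ) : ℂ :=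
  Complex.exp (2 * Real.pi * Complex.I * w / p)

/-- `σ_m(x,ζ) = ∏_{i=1}^{m} (x + x⁻¹ − ζ^i − ζ^{−i})`. -/
noncomputable def sigma' (m : ℕ) (x ζ : ℂ) : ℂ :=
  ∏ i ∈ Finset.Icc 1 m, (x + x⁻¹ - ζ ^ i - (ζ ^ i)⁻¹)

/-- Evaluation at `ζ : ℂ` of the Gaussian binomial coefficient `[n choose k]_q ∈ ℤ[q]`,
defined by the `q`-Pascal recursion, agreeing with
`∏_{i=1}^{k} (1−q^{n−k+i})/(1−q^i)` for `k ≤ n` and with `0` for `k > n`. -/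
def qbinom : ℕ → ℕ → ℂ → ℂ
  | _, 0, _ => 1
  | 0, _ + 1, _ => 0
  | n + 1, k + 1, ζ => qbinom n k ζ + ζ ^ (k + 1) * qbinom n (k + 1) ζ


open Polynomial in
lemma prod_range_sub_pow (p : ℕ) (hp : 0 < p) {ζ : ℂ} (hζ : IsPrimitiveRoot ζ p) (x : ℂ) :
    ∏ i ∈ Finset.range p, (x - ζ ^ i) = x ^ p - 1 := by
  have hmonic : (X ^ p - C (1 : ℂ)).Monic := monic_X_pow_sub_C (1 : ℂ) hp.ne'
  have hcard : Multiset.card (X ^ p - C (1 : ℂ)).roots = (X ^ p - C (1 : ℂ)).natDegree := by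
    rw [natDegree_X_pow_sub_C, ← nthRoots]
    exact hζ.card_nthRoots_one
  have h2 := prod_multiset_X_sub_C_of_monic_of_roots_card_eq hmonic hcard
  have h1 : (X ^ p - C (1 : ℂ)).roots = (Multiset.range p).map (ζ ^ · * 1) := by
    rw [← nthRoots]; exact hζ.nthRoots_eq (one_pow p)
  have := congrArg (eval x) h2
  simp only [eval_multiset_prod, h1, Multiset.map_map, Function.comp, eval_sub, eval_X, eval_C,
    eval_pow, mul_one] at this
  rw [← this, Finset.prod_eq_multiset_prod]
  simp [Finset.range, Multiset.map_map, Function.comp]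

lemma term_eq (p : ℕ) (hp : 3 ≤ p) (x ζ : ℂ) (hx : x ≠ 0) (hζ : IsPrimitiveRoot ζ p) :
    (x + x⁻¹ - 2) * sigma' (p - 1) x ζ = (x ^ p - 1) ^ 2 / x ^ p := by
  have hp0 : 0 < p := by omega
  obtain ⟨m, rfl⟩ : ∃ m, p = m + 1 := ⟨p - 1, by omega⟩
  simp only [Nat.add_sub_cancel] at *
  have hζ0 : ζ ≠ 0 := hζ.ne_zero hp0.ne'
  set S : ℂ := ∏ i ∈ Finset.Icc 1 m, (x - ζ ^ i) with hS
  have hIco : Finset.Icc 1 m = Finset.Ico 1 (m + 1) := by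
    rw [← Finset.Ico_add_one_right_eq_Icc]
  have key1 : (x - 1) * S = x ^ (m + 1) - 1 := by
    rw [← prod_range_sub_pow (m + 1) hp0 hζ x, Finset.range_eq_Ico,
      Finset.prod_eq_prod_Ico_succ_bot hp0 (fun i => x - ζ ^ i), hS, hIco]
    simp
  have key2 : ∏ i ∈ Finset.Icc 1 m, (x - (ζ ^ i)⁻¹) = S := by
    rw [hS]
    apply Finset.prod_nbij' (fun i => m + 1 - i) (fun i => m + 1 - i)
    · intro a ha
      simp only [Finset.mem_Icc] at ha ⊢
      omega
    · intro a ha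
      simp only [Finset.mem_Icc] at ha ⊢
      omega
    · intro a ha
      simp only [Finset.mem_Icc] at ha
      omega
    · intro a ha
      simp only [Finset.mem_Icc] at ha
      omega
    · intro a ha
      simp only [Finset.mem_Icc] at ha
      congr 1
      have h1 : ζ ^ (m + 1 - a) * ζ ^ a = 1 := by
        rw [← pow_add]
        have h2 : m + 1 - a + a = m + 1 := by omega
        rw [h2, hζ.pow_eq_one]
      exact inv_eq_of_mul_eq_one_left h1
  have key3 : sigma' m x ζ = (x⁻¹) ^ m * (S * S) := by
    rw [sigma']
    have h3 : ∀ i ∈ Finset.Icc 1 m,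
        x + x⁻¹ - ζ ^ i - (ζ ^ i)⁻¹ = x⁻¹ * ((x - ζ ^ i) * (x - (ζ ^ i)⁻¹)) := by
      intro i _
      have hζi : (ζ : ℂ) ^ i ≠ 0 := pow_ne_zero _ hζ0
      field_simp
      ring
    rw [Finset.prod_congr rfl h3, Finset.prod_mul_distrib, Finset.prod_const,
      Finset.prod_mul_distrib, key2, Nat.card_Icc, Nat.add_sub_cancel]
  have hx1 : x + x⁻¹ - 2 = x⁻¹ * (x - 1) ^ 2 := by field_simp; ring
  rw [key3, hx1]
  have hxp : (x : ℂ) ^ (m + 1) ≠ 0 := pow_ne_zero _ hx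
  rw [eq_div_iff hxp]
  calc x⁻¹ * (x - 1) ^ 2 * (x⁻¹ ^ m * (S * S)) * x ^ (m + 1)
      = ((x - 1) * S) ^ 2 * (x⁻¹ ^ (m + 1) * x ^ (m + 1)) := by ring
    _ = (x ^ (m + 1) - 1) ^ 2 := by
        rw [key1, ← mul_pow, inv_mul_cancel₀ hx, one_pow, mul_one]

theorem stmt11 (p : ℕ) (hp : 3 ≤ p) (hodd : Odd p) (lam : ℂ) :
    ∑ n ∈ Finset.range p,
        (epow p (lam + 2 * n + 1) + epow p (-(lam + 2 * n + 1)) - 2) *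
          sigma' (p - 1) (epow p (lam + 2 * n + 1)) (ep p) =
      (p : ℂ) * (Complex.exp (2 * Real.pi * Complex.I * lam) +
        Complex.exp (-(2 * Real.pi * Complex.I * lam)) - 2) := by
  have hp0 : p ≠ 0 := by omega
  have hζ : IsPrimitiveRoot (ep p) p := by
    rw [ep]; exact Complex.isPrimitiveRoot_exp p hp0
  set E := Complex.exp (2 * Real.pi * Complex.I * lam) with hE
  have hEne : E ≠ 0 := Complex.exp_ne_zero _
  have hterm : ∀ n ∈ Finset.range p,
      (epow p (lam + 2 * n + 1) + epow p (-(lam + 2 * n + 1)) - 2) *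
          sigma' (p - 1) (epow p (lam + 2 * n + 1)) (ep p) =
        E + Complex.exp (-(2 * Real.pi * Complex.I * lam)) - 2 := by
    intro n _
    set x := epow p (lam + 2 * n + 1) with hxdef
    have hx : x ≠ 0 := Complex.exp_ne_zero _
    have hinv : epow p (-(lam + 2 * n + 1)) = x⁻¹ := by
      rw [hxdef, epow, epow, ← Complex.exp_neg]
      congr 1
      ring
    have hxp : x ^ p = E := by
      rw [hxdef, epow, ← Complex.exp_nat_mul]
      have hpc : (p : ℂ) ≠ 0 := Nat.cast_ne_zero.mpr hp0
      have h2 : (p : ℂ) * (2 * Real.pi * Complex.I * (lam + 2 * n + 1) / p) =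
          2 * Real.pi * Complex.I * lam + (2 * n + 1 : ℤ) * (2 * Real.pi * Complex.I) := by
        field_simp
        push_cast
        ring
      rw [h2, Complex.exp_add, Complex.exp_int_mul_two_pi_mul_I, mul_one, hE]
    rw [hinv, term_eq p hp x (ep p) hx hζ, hxp, Complex.exp_neg]
    field_simp
    ring
  rw [Finset.sum_congr rfl hterm, Finset.sum_const, Finset.card_range, nsmul_eq_mul]
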